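/- For every ε > 0 there exists a compact set B ⊂ ℝ² such that for all parameters K, K̃ ∈ (0, 1) and all integers m, n ≥ 1, P( (K·U₁, K̃·V₁) ∉ B | (U₀, V₀) = (m, n) ) < ε; that is, one step of the normed stochastic Ricker competition chain lands in a fixed compact set with probability at least 1 − ε, uniformly over all starting states and all small inhibition parameters. -/

import Mathlib

open Filter
open scoped Classical

/-- The modified offspring distribution: given inhibition exponent c, the litter size has
P(ξ = k) = e^{−c}·q(k) for k ≥ 1 and P(ξ = 0) = 1 − e^{−c}·(1 − q(0)). -/
noncomputable def modPMF (c : ℝ) (q : ℕ → ℝ) : ℕ → ℝ :=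
  fun k => if k = 0 then 1 - Real.exp (-c) * (1 - q 0) else Real.exp (-c) * q k

/-- `convPow f m` is the m-fold convolution power of the pmf `f` on ℕ: the distribution of
the sum of m i.i.d. random variables with pmf `f` (the point mass at 0 when m = 0). -/
noncomputable def convPow (f : ℕ → ℝ) : ℕ → ℕ → ℝ
  | 0, k => if k = 0 then 1 else 0
  | m + 1, k => ∑ i ∈ Finset.range (k + 1), f i * convPow f m (k - i)

/-- The transition probabilities of the stochastic Ricker competition chain (U_t, V_t) on
ℤ_{≥0}²: from (m,n), U_{t+1} is a sum of m i.i.d. litters with pmf `modPMF (K(m+bn)) q` and,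
independently, V_{t+1} is a sum of n i.i.d. litters with pmf `modPMF (K̃(am+n)) q̃`
(a coordinate equal to 0 stays 0). -/
noncomputable def rickerKernel (a b K K' : ℝ) (q q' : ℕ → ℝ) :
    ℕ × ℕ → ℕ × ℕ → ℝ :=
  fun p p' =>
    convPow (modPMF (K * ((p.1 : ℝ) + b * (p.2 : ℝ))) q) p.1 p'.1 *
    convPow (modPMF (K' * (a * (p.1 : ℝ) + (p.2 : ℝ))) q') p.2 p'.2

/-- t-step transition probabilities of a Markov kernel on ℤ_{≥0}². -/
noncomputable def kernelPow (P : ℕ × ℕ → ℕ × ℕ → ℝ) : ℕ → ℕ × ℕ → ℕ × ℕ → ℝ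
  | 0, p, p' => if p = p' then 1 else 0
  | t + 1, p, p' => ∑' s : ℕ × ℕ, P p s * kernelPow P t s p'

-- helper lemmas
lemma norm_summable_of_nonneg {f : ℕ → ℝ} (h0 : ∀ k, 0 ≤ f k) (hs : Summable f) :
    Summable fun k => ‖f k‖ := by
  have : (fun k => ‖f k‖) = f := funext fun k => Real.norm_of_nonneg (h0 k)
  rwa [this]

lemma self_mul_exp_neg_le (x : ℝ) : x * Real.exp (-x) ≤ Real.exp (-1) := by
  rcases le_or_gt x 0 with hx | hx
  · nlinarith [Real.exp_pos (-x), Real.exp_pos (-1)]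
  · have h := Real.add_one_le_exp (x - 1)
    have h2 : x * Real.exp (-x) ≤ Real.exp (x - 1) * Real.exp (-x) := by
      nlinarith [Real.exp_pos (-x)]
    calc x * Real.exp (-x) ≤ Real.exp (x - 1) * Real.exp (-x) := h2
      _ = Real.exp (-1) := by rw [← Real.exp_add]; ring_nf

lemma modPMF_nonneg {c : ℝ} {q : ℕ → ℝ} (hq : ∀ k, 0 ≤ q k) (hq1 : HasSum q 1)
    (hc : 0 ≤ c) : ∀ k, 0 ≤ modPMF c q k := by
  intro k
  unfold modPMF
  split
  · have hq0 : q 0 ≤ 1 := le_hasSum hq1 0 (fun j _ => hq j)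
    have he : Real.exp (-c) ≤ 1 := Real.exp_le_one_iff.2 (by linarith)
    have hep : 0 < Real.exp (-c) := Real.exp_pos _
    nlinarith [hq 0]
  · exact mul_nonneg (Real.exp_pos _).le (hq _)

lemma modPMF_hasSum {c : ℝ} {q : ℕ → ℝ} (hq1 : HasSum q 1) :
    HasSum (modPMF c q) 1 := by
  have heq : modPMF c q = fun k =>
      Real.exp (-c) * q k + (if k = 0 then 1 - Real.exp (-c) else 0) := by
    funext k
    unfold modPMF
    by_cases h : k = 0 <;> simp [h] <;> ring
  rw [heq]
  have H := (hq1.mul_left (Real.exp (-c))).add (hasSum_ite_eq 0 (1 - Real.exp (-c)))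
  convert H using 1
  rfl
  ring

lemma modPMF_mean {c : ℝ} {q : ℕ → ℝ} {μ : ℝ}
    (hm : HasSum (fun k : ℕ => (k : ℝ) * q k) μ) :
    HasSum (fun k : ℕ => (k : ℝ) * modPMF c q k) (Real.exp (-c) * μ) := by
  have heq : (fun k : ℕ => (k : ℝ) * modPMF c q k)
      = fun k : ℕ => Real.exp (-c) * ((k : ℝ) * q k) := by
    funext k
    unfold modPMF
    by_cases h : k = 0 <;> simp [h] <;> ring
  rw [heq]
  exact hm.mul_left _

lemma convPow_prop {f : ℕ → ℝ} {μ : ℝ} (h0 : ∀ k, 0 ≤ f k) (h1 : HasSum f 1)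
    (hm : HasSum (fun k : ℕ => (k : ℝ) * f k) μ) (m : ℕ) :
    (∀ k, 0 ≤ convPow f m k) ∧ HasSum (convPow f m) 1 ∧
      HasSum (fun k : ℕ => (k : ℝ) * convPow f m k) ((m : ℝ) * μ) := by
  induction m with
  | zero =>
    refine ⟨fun k => by unfold convPow; split <;> norm_num, ?_, ?_⟩
    · exact hasSum_ite_eq 0 1
    · have : (fun k : ℕ => (k : ℝ) * convPow f 0 k) = fun _ => (0 : ℝ) := by
        funext k
        unfold convPow
        by_cases h : k = 0 <;> simp [h]
      rw [this]
      simpa using hasSum_zero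
  | succ m ih =>
    obtain ⟨g0, gsum, gmean⟩ := ih
    set g := convPow f m with hg
    have nf : Summable fun k => ‖f k‖ := norm_summable_of_nonneg h0 h1.summable
    have ng : Summable fun k => ‖g k‖ := norm_summable_of_nonneg g0 gsum.summable
    have kf0 : ∀ k : ℕ, 0 ≤ (k : ℝ) * f k := fun k => mul_nonneg (Nat.cast_nonneg k) (h0 k)
    have kg0 : ∀ k : ℕ, 0 ≤ (k : ℝ) * g k := fun k => mul_nonneg (Nat.cast_nonneg k) (g0 k)
    have nkf : Summable fun k : ℕ => ‖(k : ℝ) * f k‖ := norm_summable_of_nonneg kf0 hm.summable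
    have nkg : Summable fun k : ℕ => ‖(k : ℝ) * g k‖ := norm_summable_of_nonneg kg0 gmean.summable
    have hconv : convPow f (m + 1) = fun k => ∑ i ∈ Finset.range (k + 1), f i * g (k - i) := by
      funext k; rfl
    refine ⟨?_, ?_, ?_⟩
    · intro k
      rw [hconv]
      exact Finset.sum_nonneg fun i _ => mul_nonneg (h0 i) (g0 _)
    · have H := hasSum_sum_range_mul_of_summable_norm nf ng
      rw [h1.tsum_eq, gsum.tsum_eq, mul_one] at H
      rwa [hconv]
    · have H1 := hasSum_sum_range_mul_of_summable_norm nkf ng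
      rw [hm.tsum_eq, gsum.tsum_eq, mul_one] at H1
      have H2 := hasSum_sum_range_mul_of_summable_norm nf nkg
      rw [h1.tsum_eq, gmean.tsum_eq, one_mul] at H2
      have H := H1.add H2
      have heq : (fun k : ℕ => (k : ℝ) * convPow f (m + 1) k)
          = fun n : ℕ => (∑ i ∈ Finset.range (n + 1), ((i : ℝ) * f i) * g (n - i))
            + ∑ i ∈ Finset.range (n + 1), f i * (((n - i : ℕ) : ℝ) * g (n - i)) := by
        funext n
        rw [hconv, Finset.mul_sum, ← Finset.sum_add_distrib]
        refine Finset.sum_congr rfl fun i hi => ?_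
        have hi' : i ≤ n := Nat.lt_succ_iff.mp (Finset.mem_range.mp hi)
        rw [Nat.cast_sub hi']
        ring
      rw [heq]
      convert H using 1
      rfl
      push_cast
      ring
  
lemma markov_tail {h : ℕ → ℝ} {μ T : ℝ} (h0 : ∀ k, 0 ≤ h k)
    (hμ : HasSum (fun k : ℕ => (k : ℝ) * h k) μ) (hT : 0 < T) :
    ∑' k : ℕ, (if T < (k : ℝ) then h k else 0) ≤ μ / T := by
  have hle : ∀ k : ℕ, (if T < (k : ℝ) then h k else 0) ≤ (k : ℝ) * h k / T := by
    intro k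
    split
    · rename_i hk
      rw [le_div_iff₀ hT]
      nlinarith [h0 k]
    · exact div_nonneg (mul_nonneg (Nat.cast_nonneg k) (h0 k)) hT.le
  have hs2 : Summable fun k : ℕ => (k : ℝ) * h k / T := hμ.summable.div_const T
  have hs1 : Summable fun k : ℕ => (if T < (k : ℝ) then h k else 0) :=
    Summable.of_nonneg_of_le (fun k => by split; exacts [h0 k, le_rfl]) hle hs2
  calc ∑' k : ℕ, (if T < (k : ℝ) then h k else 0) ≤ ∑' k : ℕ, (k : ℝ) * h k / T :=
        Summable.tsum_le_tsum hle hs1 hs2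
    _ = μ / T := by rw [tsum_div_const, hμ.tsum_eq]

set_option maxHeartbeats 1000000 in
/-- For every ε > 0 there is one fixed compact set B ⊂ ℝ² such that one step of the
normed stochastic Ricker competition chain lands in B with probability at least 1 − ε,
uniformly over all starting all-positive states (m,n) and all inhibition parameters
K, K̃ ∈ (0,1). -/
theorem normed_chain_one_step_uniformly_tight
    (r r' a b : ℝ) (ha : 0 < a) (hb : 0 < b)
    (q q' : ℕ → ℝ)
    (hq : ∀ k, 0 ≤ q k) (hq1 : HasSum q 1)
    (hqmean : HasSum (fun k : ℕ => (k : ℝ) * q k) (Real.exp r))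
    (hqvar : ∃ v : ℝ, HasSum (fun k : ℕ => (k : ℝ) ^ 2 * q k) v)
    (hq' : ∀ k, 0 ≤ q' k) (hq1' : HasSum q' 1)
    (hqmean' : HasSum (fun k : ℕ => (k : ℝ) * q' k) (Real.exp r'))
    (hqvar' : ∃ v : ℝ, HasSum (fun k : ℕ => (k : ℝ) ^ 2 * q' k) v)
    (ε : ℝ) (hε : 0 < ε) :
    ∃ B : Set (ℝ × ℝ), IsCompact B ∧
      ∀ K K' : ℝ, 0 < K → K < 1 → 0 < K' → K' < 1 →
        ∀ m n : ℕ, 1 ≤ m → 1 ≤ n →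
          (∑' p' : ℕ × ℕ,
            if ((K * p'.1 : ℝ), (K' * p'.2 : ℝ)) ∉ B
            then rickerKernel a b K K' q q' (m, n) p' else 0) < ε := by
  have hE1 : 0 < Real.exp (r - 1) := Real.exp_pos _
  have hE2 : 0 < Real.exp (r' - 1) := Real.exp_pos _
  set E1 := Real.exp (r - 1) with hE1def
  set E2 := Real.exp (r' - 1) with hE2def
  set M : ℝ := 1 + 2 * E1 / ε + 2 * E2 / ε with hMdef
  have hMpos : 0 < M := by positivity
  have hkey : ε / 2 * M = ε / 2 + E1 + E2 := by
    rw [hMdef]; field_simp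
  have hhalf1 : E1 / M < ε / 2 := by
    rw [div_lt_iff₀ hMpos]; nlinarith
  have hhalf2 : E2 / M < ε / 2 := by
    rw [div_lt_iff₀ hMpos]; nlinarith
  refine ⟨Set.Icc (-1 : ℝ) M ×ˢ Set.Icc (-1 : ℝ) M, isCompact_Icc.prod isCompact_Icc, ?_⟩
  intro K K' hK hK1 hK'pos hK'1 m n hm hn
  have hm1 : (1 : ℝ) ≤ (m : ℝ) := by exact_mod_cast hm
  have hn1 : (1 : ℝ) ≤ (n : ℝ) := by exact_mod_cast hn
  set c1 : ℝ := K * ((m : ℝ) + b * (n : ℝ)) with hc1def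
  set c2 : ℝ := K' * (a * (m : ℝ) + (n : ℝ)) with hc2def
  have hc1 : 0 ≤ c1 := by rw [hc1def]; positivity
  have hc2 : 0 ≤ c2 := by rw [hc2def]; positivity
  set g1 := convPow (modPMF c1 q) m with hg1def
  set g2 := convPow (modPMF c2 q') n with hg2def
  obtain ⟨g1nn, g1sum, g1mean⟩ :=
    convPow_prop (modPMF_nonneg hq hq1 hc1) (modPMF_hasSum hq1) (modPMF_mean hqmean) m
  obtain ⟨g2nn, g2sum, g2mean⟩ :=
    convPow_prop (modPMF_nonneg hq' hq1' hc2) (modPMF_hasSum hq1') (modPMF_mean hqmean') n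
  have hT1 : 0 < M / K := div_pos hMpos hK
  have hT2 : 0 < M / K' := div_pos hMpos hK'pos
  have t1 := markov_tail g1nn g1mean hT1
  have t2 := markov_tail g2nn g2mean hT2
  -- mean bounds
  have hnum1 : (m : ℝ) * (Real.exp (-c1) * Real.exp r) * K ≤ E1 := by
    have step1 : Real.exp (-c1) ≤ Real.exp (-(K * m)) := by
      apply Real.exp_le_exp.2
      rw [hc1def]
      nlinarith [mul_nonneg (mul_nonneg hK.le hb.le) (Nat.cast_nonneg n)]
    have step2 : (K * m) * Real.exp (-(K * m)) ≤ Real.exp (-1) := self_mul_exp_neg_le _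
    have hEeq : E1 = Real.exp (-1) * Real.exp r := by
      rw [hE1def, ← Real.exp_add]; ring_nf
    rw [hEeq]
    nlinarith [Real.exp_pos r, Real.exp_pos (-(K * m)),
      mul_nonneg (mul_nonneg (mul_pos hK (lt_of_lt_of_le one_pos hm1)).le
        (sub_nonneg.2 step1)) (Real.exp_pos r).le,
      mul_nonneg (sub_nonneg.2 step2) (Real.exp_pos r).le]
  have hnum2 : (n : ℝ) * (Real.exp (-c2) * Real.exp r') * K' ≤ E2 := by
    have step1 : Real.exp (-c2) ≤ Real.exp (-(K' * n)) := by
      apply Real.exp_le_exp.2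
      rw [hc2def]
      nlinarith [mul_nonneg (mul_nonneg hK'pos.le ha.le) (Nat.cast_nonneg m)]
    have step2 : (K' * n) * Real.exp (-(K' * n)) ≤ Real.exp (-1) := self_mul_exp_neg_le _
    have hEeq : E2 = Real.exp (-1) * Real.exp r' := by
      rw [hE2def, ← Real.exp_add]; ring_nf
    rw [hEeq]
    nlinarith [Real.exp_pos r', Real.exp_pos (-(K' * n)),
      mul_nonneg (mul_nonneg (mul_pos hK'pos (lt_of_lt_of_le one_pos hn1)).le
        (sub_nonneg.2 step1)) (Real.exp_pos r').le,
      mul_nonneg (sub_nonneg.2 step2) (Real.exp_pos r').le]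
  have mb1 : (m : ℝ) * (Real.exp (-c1) * Real.exp r) / (M / K) ≤ E1 / M := by
    rw [div_div_eq_mul_div]
    exact div_le_div_of_nonneg_right hnum1 hMpos.le |>.trans_eq rfl
  have mb2 : (n : ℝ) * (Real.exp (-c2) * Real.exp r') / (M / K') ≤ E2 / M := by
    rw [div_div_eq_mul_div]
    exact div_le_div_of_nonneg_right hnum2 hMpos.le |>.trans_eq rfl
  -- the dominating function
  set G1 : ℕ → ℝ := fun k => if M / K < (k : ℝ) then g1 k else 0 with hG1def
  set G2 : ℕ → ℝ := fun k => if M / K' < (k : ℝ) then g2 k else 0 with hG2def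
  have G1nn : ∀ k, 0 ≤ G1 k := fun k => by
    rw [hG1def]; dsimp only; split; exacts [g1nn k, le_rfl]
  have G2nn : ∀ k, 0 ≤ G2 k := fun k => by
    rw [hG2def]; dsimp only; split; exacts [g2nn k, le_rfl]
  have G1le : ∀ k, G1 k ≤ g1 k := fun k => by
    rw [hG1def]; dsimp only; split; exacts [le_rfl, g1nn k]
  have G2le : ∀ k, G2 k ≤ g2 k := fun k => by
    rw [hG2def]; dsimp only; split; exacts [le_rfl, g2nn k]
  have SG1 : Summable G1 := Summable.of_nonneg_of_le G1nn G1le g1sum.summable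
  have SG2 : Summable G2 := Summable.of_nonneg_of_le G2nn G2le g2sum.summable
  have S12 : Summable fun p : ℕ × ℕ => G1 p.1 * g2 p.2 :=
    SG1.mul_of_nonneg g2sum.summable G1nn g2nn
  have S21 : Summable fun p : ℕ × ℕ => g1 p.1 * G2 p.2 :=
    g1sum.summable.mul_of_nonneg SG2 g1nn G2nn
  set Gf : ℕ × ℕ → ℝ := fun p => G1 p.1 * g2 p.2 + g1 p.1 * G2 p.2 with hGfdef
  have SG : Summable Gf := S12.add S21
  have hker : ∀ p : ℕ × ℕ, rickerKernel a b K K' q q' (m, n) p = g1 p.1 * g2 p.2 :=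
    fun p => rfl
  have Fle : ∀ p : ℕ × ℕ,
      @ite ℝ (((K * p.1 : ℝ), (K' * p.2 : ℝ)) ∉ (Set.Icc (-1 : ℝ) M ×ˢ Set.Icc (-1 : ℝ) M))
        (@instDecidableNot _ (Classical.propDecidable _))
        (rickerKernel a b K K' q q' (m, n) p) 0 ≤ Gf p := by
    intro p
    have hGfnn : 0 ≤ Gf p :=
      add_nonneg (mul_nonneg (G1nn p.1) (g2nn p.2)) (mul_nonneg (g1nn p.1) (G2nn p.2))
    split
    · rename_i hp
      have hx0 : (0 : ℝ) ≤ K * p.1 := by positivity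
      have hy0 : (0 : ℝ) ≤ K' * p.2 := by positivity
      have hor : M < K * p.1 ∨ M < K' * p.2 := by
        by_contra hcon
        push_neg at hcon
        have hx1 : (-1 : ℝ) ≤ K * p.1 := by linarith
        have hy1 : (-1 : ℝ) ≤ K' * p.2 := by linarith
        exact hp ⟨⟨hx1, hcon.1⟩, ⟨hy1, hcon.2⟩⟩
      rw [hker p, hGfdef]
      dsimp only
      rcases hor with h | h
      · have hlt : M / K < (p.1 : ℝ) := (div_lt_iff₀ hK).2 (by linarith [mul_comm K (p.1 : ℝ)])
        rw [hG1def]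
        dsimp only
        rw [if_pos hlt]
        have := mul_nonneg (g1nn p.1) (G2nn p.2)
        linarith
      · have hlt : M / K' < (p.2 : ℝ) := (div_lt_iff₀ hK'pos).2 (by linarith [mul_comm K' (p.2 : ℝ)])
        rw [hG2def]
        dsimp only
        rw [if_pos hlt]
        have h1 := mul_nonneg (G1nn p.1) (g2nn p.2)
        linarith
    · exact hGfnn
  have Fnn : ∀ p : ℕ × ℕ, 0 ≤
      @ite ℝ (((K * p.1 : ℝ), (K' * p.2 : ℝ)) ∉ (Set.Icc (-1 : ℝ) M ×ˢ Set.Icc (-1 : ℝ) M))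
        (@instDecidableNot _ (Classical.propDecidable _))
        (rickerKernel a b K K' q q' (m, n) p) 0 := by
    intro p
    split
    · rw [hker p]; exact mul_nonneg (g1nn p.1) (g2nn p.2)
    · exact le_rfl
  have SF : Summable fun p : ℕ × ℕ =>
      @ite ℝ (((K * p.1 : ℝ), (K' * p.2 : ℝ)) ∉ (Set.Icc (-1 : ℝ) M ×ˢ Set.Icc (-1 : ℝ) M))
        (@instDecidableNot _ (Classical.propDecidable _))
        (rickerKernel a b K K' q q' (m, n) p) 0 :=
    Summable.of_nonneg_of_le Fnn Fle SG
  refine lt_of_le_of_lt (Summable.tsum_le_tsum Fle SF SG) ?_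
  have htsumGf : ∑' p : ℕ × ℕ, Gf p
      = (∑' k, G1 k) * (∑' k, g2 k) + (∑' k, g1 k) * (∑' k, G2 k) := by
    rw [hGfdef]
    rw [Summable.tsum_add S12 S21, ← Summable.tsum_mul_tsum SG1 g2sum.summable S12,
      ← Summable.tsum_mul_tsum g1sum.summable SG2 S21]
  rw [htsumGf, g2sum.tsum_eq, g1sum.tsum_eq, mul_one, one_mul]
  have b1 : (∑' k, G1 k) ≤ E1 / M := t1.trans mb1
  have b2 : (∑' k, G2 k) ≤ E2 / M := t2.trans mb2
  linarith
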